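/- For every integer m ≥ 0, one has Σ_{a∈A_{+,m}} a^{q^m−1} ≠ 0 in A. (Genus-zero instance of the paper's Lemma that the function 𝒮_{j_m} does not vanish at the Frobenius twist Ξ^{(m)}.) -/

import Mathlib

/-!
Genus-zero setting: `Fq` the finite field with `q = Fintype.card Fq` elements,
`A = Fq[θ] = Polynomial Fq`.  `A_{+,d}`, the set of monic polynomials of degree
`d`, is enumerated by tuples of lower-order coefficients `c : Fin d → Fq`.
-/

open Polynomial

/-- The monic polynomial `θ^d + Σ_i c i • θ^i` of degree `d`; as `c` ranges over
all tuples this enumerates the set `A_{+,d}` of monic polynomials of degree `d`. -/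
noncomputable def monicOf (Fq : Type) [Field Fq] (d : ℕ) (c : Fin d → Fq) : Polynomial Fq :=
  Polynomial.X ^ d + ∑ i : Fin d, Polynomial.C (c i) * Polynomial.X ^ (i : ℕ)

section Aux

variable (Fq : Type) [Field Fq] [Fintype Fq]

/-- Cardinality of the splitting field of `X^(q^m) - X` over `Fq` is `q^m`. -/
lemma aux_card_splitting (m : ℕ) (hm : 0 < m) :
    ∀ x : (X ^ Fintype.card Fq ^ m - X : Polynomial Fq).SplittingField,
      x ^ Fintype.card Fq ^ m = x := by
  classical
  let q := Fintype.card Fq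
  let g : Polynomial Fq := X ^ q ^ m - X
  let E := g.SplittingField
  obtain ⟨p, hcp⟩ := CharP.exists Fq
  haveI : CharP Fq p := hcp
  obtain ⟨k, hpk, hk⟩ := FiniteField.card Fq p
  haveI hp' : Fact p.Prime := ⟨hpk⟩
  haveI : CharP E p := charP_of_injective_algebraMap' Fq (A := E) p
  -- the set of solutions is a subalgebra
  let S : Subalgebra Fq E :=
    { carrier := {x | x ^ q ^ m = x}
      mul_mem' := by
        intro a b ha hb
        simp only [Set.mem_setOf_eq] at *
        rw [mul_pow, ha, hb]
      one_mem' := by simp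
      add_mem' := by
        intro a b ha hb
        simp only [Set.mem_setOf_eq] at *
        have : q ^ m = p ^ ((k : ℕ) * m) := by
          show Fintype.card Fq ^ m = _
          rw [hk, ← pow_mul]
        rw [this] at ha hb ⊢
        rw [add_pow_char_pow, ha, hb]
      zero_mem' := by
        simp only [Set.mem_setOf_eq]
        exact zero_pow (by positivity)
      algebraMap_mem' := by
        intro r
        simp only [Set.mem_setOf_eq]
        rw [← map_pow, FiniteField.pow_card_pow] }
  have hroots : g.rootSet E ⊆ (S : Set E) := by
    intro x hx
    have hgne : g ≠ 0 := by
      have h1q : 1 < q ^ m := Nat.one_lt_pow hm.ne' Fintype.one_lt_card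
      show (X ^ q ^ m - X : Polynomial Fq) ≠ 0
      exact FiniteField.X_pow_card_sub_X_ne_zero Fq h1q
    rw [mem_rootSet_of_ne hgne] at hx
    have : (aeval x) g = x ^ q ^ m - x := by simp [g]
    rw [this, sub_eq_zero] at hx
    exact hx
  have hadj : Algebra.adjoin Fq (g.rootSet E) ≤ S := Algebra.adjoin_le hroots
  rw [SplittingField.adjoin_rootSet] at hadj
  intro x
  exact hadj (by trivial : x ∈ (⊤ : Subalgebra Fq E))

end Aux

section Aux2

variable (Fq : Type) [Field Fq] [Fintype Fq]

lemma aux_card (m : ℕ) (hm : 0 < m) :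
    Nat.card (X ^ Fintype.card Fq ^ m - X : Polynomial Fq).SplittingField
      = Fintype.card Fq ^ m := by
  classical
  let g : Polynomial Fq := X ^ Fintype.card Fq ^ m - X
  let E := g.SplittingField
  obtain ⟨p, hcp⟩ := CharP.exists Fq
  haveI : CharP Fq p := hcp
  obtain ⟨k, hpk, hk⟩ := FiniteField.card Fq p
  haveI hp' : Fact p.Prime := ⟨hpk⟩
  haveI : Finite E := Module.finite_of_finite Fq
  haveI : Fintype E := Fintype.ofFinite E
  have h1q : 1 < Fintype.card Fq ^ m := Nat.one_lt_pow hm.ne' Fintype.one_lt_card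
  have hgne : g ≠ 0 := FiniteField.X_pow_card_sub_X_ne_zero Fq h1q
  have hsep : g.Separable := by
    refine galois_poly_separable p (Fintype.card Fq ^ m) ?_
    exact dvd_trans (hk ▸ dvd_pow_self p k.ne_zero) (dvd_pow_self _ hm.ne')
  have key : Fintype.card (g.rootSet E) = g.natDegree :=
    card_rootSet_eq_natDegree hsep (SplittingField.splits g)
  have hdeg : g.natDegree = Fintype.card Fq ^ m :=
    FiniteField.X_pow_card_sub_X_natDegree_eq Fq h1q
  have huniv : g.rootSet E = Set.univ := by
    rw [Set.eq_univ_iff_forall]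
    intro x
    rw [mem_rootSet_of_ne hgne]
    have h1 : (aeval x) g = x ^ Fintype.card Fq ^ m - x := by simp [g]
    rw [h1, sub_eq_zero]
    exact aux_card_splitting Fq m hm x
  have h2 : Nat.card E = Nat.card (g.rootSet E) := by
    rw [huniv]
    exact (Nat.card_congr (Equiv.Set.univ E)).symm
  rw [h2, Nat.card_eq_fintype_card, key, hdeg]

end Aux2

/-- for every `m ≥ 0`, `Σ_{a ∈ A_{+,m}} a^{q^m - 1} ≠ 0` in `A = Fq[θ]`. -/
theorem statement2 (Fq : Type) [Field Fq] [Fintype Fq] (m : ℕ) :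
    ∑ c : Fin m → Fq, monicOf Fq m c ^ (Fintype.card Fq ^ m - 1) ≠ 0 := by
  classical
  rcases Nat.eq_zero_or_pos m with rfl | hm
  · simp [monicOf]
  intro hzero
  let g : Polynomial Fq := X ^ Fintype.card Fq ^ m - X
  let E := g.SplittingField
  haveI : Finite E := Module.finite_of_finite Fq
  haveI : Fintype E := Fintype.ofFinite E
  have hcardE : Fintype.card E = Fintype.card Fq ^ m := by
    have h := aux_card Fq m hm
    rwa [Nat.card_eq_fintype_card] at h
  have hfr : Module.finrank Fq E = m :=
    Nat.pow_right_injective Fintype.one_lt_card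
      ((Module.card_eq_pow_finrank (K := Fq) (V := E)).symm.trans hcardE)
  obtain ⟨α, hα⟩ := Field.exists_primitive_element_of_finite_top Fq E
  have hint : IsIntegral Fq α := IsIntegral.of_finite Fq α
  have hdeg : (minpoly Fq α).natDegree = m := by
    have h1 := IntermediateField.adjoin.finrank hint
    rw [hα, IntermediateField.finrank_top'] at h1
    exact h1.symm.trans hfr
  have li : LinearIndependent Fq fun i : Fin m => α ^ (i : ℕ) :=
    hdeg ▸ linearIndependent_pow (K := Fq) α
  set N := Fintype.card Fq ^ m - 1 with hN
  let f : (Fin m → Fq) → E := fun c => aeval α (monicOf Fq m c)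
  have hf : ∀ c, f c = α ^ m + ∑ i : Fin m, c i • α ^ (i : ℕ) := by
    intro c
    simp [f, monicOf, Algebra.smul_def]
  have hinj : Function.Injective f := by
    intro c c' h
    rw [hf, hf] at h
    have h' : ∑ i : Fin m, c i • α ^ (i : ℕ) = ∑ i : Fin m, c' i • α ^ (i : ℕ) :=
      add_left_cancel h
    have hsum : ∑ i : Fin m, (c i - c' i) • α ^ (i : ℕ) = 0 := by
      simp only [sub_smul, Finset.sum_sub_distrib, h', sub_self]
    have hz := Fintype.linearIndependent_iff.mp li (fun i => c i - c' i) hsum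
    funext i
    exact sub_eq_zero.mp (hz i)
  have hbij : Function.Bijective f := by
    rw [Fintype.bijective_iff_injective_and_card]
    exact ⟨hinj, by rw [Fintype.card_fun, Fintype.card_fin, hcardE]⟩
  have h2 : ∑ c : Fin m → Fq, (f c) ^ N = 0 := by
    have h3 := congrArg (aeval α (R := Fq)) hzero
    simpa [map_sum, map_pow, f] using h3
  have h3 : ∑ c : Fin m → Fq, (f c) ^ N = ∑ x : E, x ^ N :=
    Fintype.sum_bijective f hbij _ _ (fun c => rfl)
  have hlt : 1 < Fintype.card E := hcardE ▸ Nat.one_lt_pow hm.ne' Fintype.one_lt_card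
  have h4 : ∑ x : E, x ^ N = -1 := by
    have hNE : N = Fintype.card E - 1 := by rw [hN, hcardE]
    rw [hNE, ← Finset.add_sum_erase _ _ (Finset.mem_univ (0 : E)),
      zero_pow (Nat.sub_ne_zero_of_lt hlt), zero_add]
    have hone : ∀ x ∈ Finset.univ.erase (0 : E), x ^ (Fintype.card E - 1) = 1 := by
      intro x hx
      exact FiniteField.pow_card_sub_one_eq_one x (Finset.ne_of_mem_erase hx)
    rw [Finset.sum_congr rfl hone, Finset.sum_const,
      Finset.card_erase_of_mem (Finset.mem_univ _), Finset.card_univ, nsmul_one,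
      Nat.cast_sub hlt.le, Nat.cast_one, FiniteField.cast_card_eq_zero, zero_sub]
  rw [h3, h4] at h2
  exact one_ne_zero (neg_eq_zero.mp h2)
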